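/- Let X : Fin D₁ × Fin D₂ × Fin D₃ → ℝ be a 3-way real tensor, and for matrices U₁ (D₁ × d₁), U₂ (D₂ × d₂), U₃ (D₃ × d₃) define the L1-Tucker objective f(U₁,U₂,U₃) := Σ_{i,j,k} |Σ_{a,b,c} X(a,b,c)·(U₁)_{ai}(U₂)_{bj}(U₃)_{ck}|. Let (U₁^{(q)}, U₂^{(q)}, U₃^{(q)})_{q≥0} be sequences of matrices with orthonormal columns such that the sequence q ↦ f(U₁^{(q)}, U₂^{(q)}, U₃^{(q)}) is monotone nondecreasing. Then this sequence is bounded above by √(d₁d₂d₃)·‖X‖_F and converges to a finite limit. -/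
import Mathlib

open BigOperators Matrix Filter

lemma contract_le {D d : ℕ} (U : Matrix (Fin D) (Fin d) ℝ) (hU : Uᵀ * U = 1)
    (v : Fin D → ℝ) :
    ∑ i : Fin d, (∑ a : Fin D, v a * U a i) ^ 2 ≤ ∑ a : Fin D, v a ^ 2 := by
  set w : Fin d → ℝ := fun i => ∑ a, v a * U a i with hw
  set u : Fin D → ℝ := fun a => ∑ i, U a i * w i with hu
  have hUU : ∀ i j, ∑ a, U a i * U a j = if i = j then (1:ℝ) else 0 := by
    intro i j
    have := congrFun (congrFun hU i) j
    simpa [Matrix.mul_apply, Matrix.transpose_apply, Matrix.one_apply] using this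
  have hWsum : ∑ i, w i ^ 2 = ∑ a, v a * u a := by
    calc ∑ i, w i ^ 2 = ∑ i, ∑ a, v a * U a i * w i := by
          refine Finset.sum_congr rfl fun i _ => ?_
          rw [sq, hw, Finset.sum_mul]
      _ = ∑ a, ∑ i, v a * U a i * w i := Finset.sum_comm
      _ = ∑ a, v a * u a := by
          refine Finset.sum_congr rfl fun a _ => ?_
          rw [hu, Finset.mul_sum]
          exact Finset.sum_congr rfl fun i _ => by ring
  have hUsum : ∑ a, u a ^ 2 = ∑ i, w i ^ 2 := by
    calc ∑ a, u a ^ 2 = ∑ a, ∑ i, ∑ j, (U a i * w i) * (U a j * w j) := by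
          refine Finset.sum_congr rfl fun a _ => ?_
          rw [sq, hu, Finset.sum_mul_sum]
      _ = ∑ i, ∑ j, (∑ a, U a i * U a j) * (w i * w j) := by
          rw [Finset.sum_comm]
          refine Finset.sum_congr rfl fun i _ => ?_
          rw [Finset.sum_comm]
          refine Finset.sum_congr rfl fun j _ => ?_
          rw [Finset.sum_mul]
          exact Finset.sum_congr rfl fun a _ => by ring
      _ = ∑ i, w i ^ 2 := by
          refine Finset.sum_congr rfl fun i _ => ?_
          rw [Finset.sum_eq_single i]
          · simp [hUU, sq]
          · intro j _ hj; simp [hUU, (Ne.symm hj)]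
          · intro h; simp at h
  have hCS := Finset.sum_mul_sq_le_sq_mul_sq Finset.univ v u
  have hwnn : (0:ℝ) ≤ ∑ i, w i ^ 2 := Finset.sum_nonneg fun i _ => sq_nonneg _
  rcases eq_or_lt_of_le hwnn with h0 | hpos
  · rw [← h0]; exact Finset.sum_nonneg fun a _ => sq_nonneg _
  · nlinarith [hCS, hWsum, hUsum]

lemma sum_rotate {α β γ : Type*} [Fintype α] [Fintype β] [Fintype γ] (f : α → β → γ → ℝ) :
    ∑ i : α, ∑ j : β, ∑ k : γ, f i j k = ∑ j : β, ∑ k : γ, ∑ i : α, f i j k := by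
  calc ∑ i : α, ∑ j : β, ∑ k : γ, f i j k
      = ∑ j : β, ∑ i : α, ∑ k : γ, f i j k := Finset.sum_comm
    _ = ∑ j : β, ∑ k : γ, ∑ i : α, f i j k :=
        Finset.sum_congr rfl fun j _ => Finset.sum_comm

lemma sum_rev {α β γ : Type*} [Fintype α] [Fintype β] [Fintype γ] (f : α → β → γ → ℝ) :
    ∑ i : α, ∑ j : β, ∑ k : γ, f i j k = ∑ k : γ, ∑ j : β, ∑ i : α, f i j k := by
  calc ∑ i : α, ∑ j : β, ∑ k : γ, f i j k
      = ∑ i : α, ∑ k : γ, ∑ j : β, f i j k :=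
        Finset.sum_congr rfl fun i _ => Finset.sum_comm
    _ = ∑ k : γ, ∑ i : α, ∑ j : β, f i j k := Finset.sum_comm
    _ = ∑ k : γ, ∑ j : β, ∑ i : α, f i j k :=
        Finset.sum_congr rfl fun k _ => Finset.sum_comm

lemma core_sq_le {D₁ D₂ D₃ d₁ d₂ d₃ : ℕ}
    (X : Fin D₁ × Fin D₂ × Fin D₃ → ℝ)
    (U₁ : Matrix (Fin D₁) (Fin d₁) ℝ) (U₂ : Matrix (Fin D₂) (Fin d₂) ℝ)
    (U₃ : Matrix (Fin D₃) (Fin d₃) ℝ)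
    (h₁ : U₁ᵀ * U₁ = 1) (h₂ : U₂ᵀ * U₂ = 1) (h₃ : U₃ᵀ * U₃ = 1) :
    ∑ i : Fin d₁, ∑ j : Fin d₂, ∑ k : Fin d₃,
      (∑ a : Fin D₁, ∑ b : Fin D₂, ∑ c : Fin D₃, X (a,b,c) * U₁ a i * U₂ b j * U₃ c k) ^ 2
      ≤ ∑ a : Fin D₁, ∑ b : Fin D₂, ∑ c : Fin D₃, X (a,b,c) ^ 2 := by
  set Y3 : Fin D₁ → Fin D₂ → Fin d₃ → ℝ :=
    fun a b k => ∑ c, X (a,b,c) * U₃ c k with hY3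
  set Y23 : Fin D₁ → Fin d₂ → Fin d₃ → ℝ :=
    fun a j k => ∑ b, Y3 a b k * U₂ b j with hY23
  have hG : ∀ i j k, (∑ a, ∑ b, ∑ c, X (a,b,c) * U₁ a i * U₂ b j * U₃ c k)
      = ∑ a, Y23 a j k * U₁ a i := by
    intro i j k
    refine Finset.sum_congr rfl fun a _ => ?_
    rw [hY23]
    simp only [hY3]
    rw [Finset.sum_mul]
    refine Finset.sum_congr rfl fun b _ => ?_
    rw [Finset.sum_mul, Finset.sum_mul]
    exact Finset.sum_congr rfl fun c _ => by ring
  calc ∑ i, ∑ j, ∑ k, (∑ a, ∑ b, ∑ c, X (a,b,c) * U₁ a i * U₂ b j * U₃ c k) ^ 2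
      = ∑ j, ∑ k, ∑ i, (∑ a, Y23 a j k * U₁ a i) ^ 2 := by
        simp only [hG]
        exact sum_rotate _
    _ ≤ ∑ j, ∑ k, ∑ a, Y23 a j k ^ 2 := by
        refine Finset.sum_le_sum fun j _ => Finset.sum_le_sum fun k _ => ?_
        exact contract_le U₁ h₁ _
    _ = ∑ a, ∑ k, ∑ j, (∑ b, Y3 a b k * U₂ b j) ^ 2 := by
        simp only [hY23]
        exact sum_rev _
    _ ≤ ∑ a, ∑ k, ∑ b, Y3 a b k ^ 2 := by
        refine Finset.sum_le_sum fun a _ => Finset.sum_le_sum fun k _ => ?_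
        exact contract_le U₂ h₂ _
    _ = ∑ a, ∑ b, ∑ k, (∑ c, X (a,b,c) * U₃ c k) ^ 2 := by
        exact Finset.sum_congr rfl fun a _ => Finset.sum_comm
    _ ≤ ∑ a, ∑ b, ∑ c, X (a,b,c) ^ 2 := by
        refine Finset.sum_le_sum fun a _ => Finset.sum_le_sum fun b _ => ?_
        exact contract_le U₃ h₃ _

/-- The L1-Tucker objective for a 3-way tensor: the entrywise L1 norm of the Tucker core. -/
noncomputable def l1TuckerObj {D₁ D₂ D₃ d₁ d₂ d₃ : ℕ}
    (X : Fin D₁ × Fin D₂ × Fin D₃ → ℝ)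
    (U₁ : Matrix (Fin D₁) (Fin d₁) ℝ) (U₂ : Matrix (Fin D₂) (Fin d₂) ℝ)
    (U₃ : Matrix (Fin D₃) (Fin d₃) ℝ) : ℝ :=
  ∑ i : Fin d₁, ∑ j : Fin d₂, ∑ k : Fin d₃,
    |∑ a : Fin D₁, ∑ b : Fin D₂, ∑ c : Fin D₃, X (a, b, c) * U₁ a i * U₂ b j * U₃ c k|

theorem l1hooi_bounded_and_converges
    {D₁ D₂ D₃ d₁ d₂ d₃ : ℕ}
    (X : Fin D₁ × Fin D₂ × Fin D₃ → ℝ)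
    (U₁ : ℕ → Matrix (Fin D₁) (Fin d₁) ℝ)
    (U₂ : ℕ → Matrix (Fin D₂) (Fin d₂) ℝ)
    (U₃ : ℕ → Matrix (Fin D₃) (Fin d₃) ℝ)
    (horth₁ : ∀ q, (U₁ q)ᵀ * (U₁ q) = 1)
    (horth₂ : ∀ q, (U₂ q)ᵀ * (U₂ q) = 1)
    (horth₃ : ∀ q, (U₃ q)ᵀ * (U₃ q) = 1)
    (hmono : Monotone (fun q => l1TuckerObj X (U₁ q) (U₂ q) (U₃ q))) :
    (∀ q, l1TuckerObj X (U₁ q) (U₂ q) (U₃ q) ≤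
      Real.sqrt (d₁ * d₂ * d₃) *
        Real.sqrt (∑ a : Fin D₁, ∑ b : Fin D₂, ∑ c : Fin D₃, X (a, b, c) ^ 2)) ∧
    ∃ L : ℝ, Tendsto (fun q => l1TuckerObj X (U₁ q) (U₂ q) (U₃ q)) atTop (nhds L) := by
  have hXnn : (0:ℝ) ≤ ∑ a : Fin D₁, ∑ b : Fin D₂, ∑ c : Fin D₃, X (a,b,c) ^ 2 :=
    Finset.sum_nonneg fun a _ => Finset.sum_nonneg fun b _ =>
      Finset.sum_nonneg fun c _ => sq_nonneg _
  have hbound : ∀ q, l1TuckerObj X (U₁ q) (U₂ q) (U₃ q) ≤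
      Real.sqrt (d₁ * d₂ * d₃) *
        Real.sqrt (∑ a : Fin D₁, ∑ b : Fin D₂, ∑ c : Fin D₃, X (a,b,c) ^ 2) := by
    intro q
    set G : Fin d₁ × Fin d₂ × Fin d₃ → ℝ := fun p =>
      ∑ a, ∑ b, ∑ c, X (a,b,c) * U₁ q a p.1 * U₂ q b p.2.1 * U₃ q c p.2.2 with hGdef
    have hf : l1TuckerObj X (U₁ q) (U₂ q) (U₃ q) = ∑ p : Fin d₁ × Fin d₂ × Fin d₃, |G p| := by
      rw [Fintype.sum_prod_type]
      refine Finset.sum_congr rfl fun i _ => ?_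
      rw [Fintype.sum_prod_type]
    have hCS := Finset.sum_mul_sq_le_sq_mul_sq Finset.univ
      (fun _ : Fin d₁ × Fin d₂ × Fin d₃ => (1:ℝ)) (fun p => |G p|)
    simp only [one_mul, one_pow, Finset.sum_const, Finset.card_univ, nsmul_eq_mul, mul_one,
      sq_abs] at hCS
    have hcard : (Fintype.card (Fin d₁ × Fin d₂ × Fin d₃) : ℝ) = (d₁ * d₂ * d₃ : ℝ) := by
      simp [Fintype.card_prod]; ring
    have hGX : ∑ p : Fin d₁ × Fin d₂ × Fin d₃, G p ^ 2 ≤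
        ∑ a : Fin D₁, ∑ b : Fin D₂, ∑ c : Fin D₃, X (a,b,c) ^ 2 := by
      have := core_sq_le X (U₁ q) (U₂ q) (U₃ q) (horth₁ q) (horth₂ q) (horth₃ q)
      calc ∑ p : Fin d₁ × Fin d₂ × Fin d₃, G p ^ 2
          = ∑ i : Fin d₁, ∑ j : Fin d₂, ∑ k : Fin d₃,
            (∑ a, ∑ b, ∑ c, X (a,b,c) * U₁ q a i * U₂ q b j * U₃ q c k) ^ 2 := by
            rw [Fintype.sum_prod_type]
            refine Finset.sum_congr rfl fun i _ => ?_
            rw [Fintype.sum_prod_type]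
        _ ≤ _ := this
    have habs : (∑ p : Fin d₁ × Fin d₂ × Fin d₃, |G p|) ^ 2 ≤
        (d₁ * d₂ * d₃ : ℝ) * (∑ a : Fin D₁, ∑ b : Fin D₂, ∑ c : Fin D₃, X (a,b,c) ^ 2) := by
      calc (∑ p : Fin d₁ × Fin d₂ × Fin d₃, |G p|) ^ 2
          ≤ (Fintype.card (Fin d₁ × Fin d₂ × Fin d₃) : ℝ) * ∑ p, G p ^ 2 := hCS
        _ ≤ (d₁ * d₂ * d₃ : ℝ) * (∑ a : Fin D₁, ∑ b : Fin D₂, ∑ c : Fin D₃, X (a,b,c) ^ 2) := by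
            rw [hcard]
            exact mul_le_mul_of_nonneg_left hGX (by positivity)
    rw [hf, ← Real.sqrt_mul (by positivity)]
    have hsumnn : (0:ℝ) ≤ ∑ p : Fin d₁ × Fin d₂ × Fin d₃, |G p| :=
      Finset.sum_nonneg fun p _ => abs_nonneg _
    calc ∑ p : Fin d₁ × Fin d₂ × Fin d₃, |G p|
        = Real.sqrt ((∑ p : Fin d₁ × Fin d₂ × Fin d₃, |G p|) ^ 2) := (Real.sqrt_sq hsumnn).symm
      _ ≤ Real.sqrt ((d₁ * d₂ * d₃ : ℝ) *
          (∑ a : Fin D₁, ∑ b : Fin D₂, ∑ c : Fin D₃, X (a,b,c) ^ 2)) :=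
          Real.sqrt_le_sqrt habs
  refine ⟨hbound, ?_⟩
  exact ⟨_, tendsto_atTop_ciSup hmono ⟨_, Set.forall_mem_range.2 hbound⟩⟩
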